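/- arXiv:2510.08758 — 3 statements merged into one kernel-verified Lean document; each statement's English description precedes it below -/
import Mathlib

section
/- If the latent non-treatment features are independent of the document label, i.e. Z(1) and Z(0) are equal in distribution (and the potential outcomes Y(1,·), Y(0,·) are integrable), then the drift term E[Y(1, Z(1)) − Y(1, Z(0))] equals 0, and consequently the document-level effect equals the treatment-only effect: τ_d = E[Y(1, Z(1)) − Y(0, Z(0))] = E[Y(1, Z(0)) − Y(0, Z(0))] = τ_t. -/
open MeasureTheory

/-- If the latent non-treatment features are independent of the document label,
i.e. `Z(1)` and `Z(0)` are equal in distribution, then the drift term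
`E[Y(1,Z(1)) − Y(1,Z(0))]` is `0`, and consequently the document-level effect
`τ_d = E[Y(1,Z(1)) − Y(0,Z(0))]` equals the treatment-only effect
`τ_t = E[Y(1,Z(0)) − Y(0,Z(0))]`. -/
theorem drift_vanishes_of_equal_in_distribution
    {Ω ζ : Type*} [MeasurableSpace Ω] [MeasurableSpace ζ]
    (μ : Measure Ω) [IsProbabilityMeasure μ]
    (Z : Bool → Ω → ζ) (hZ : ∀ d, Measurable (Z d))
    (Y : Bool → ζ → ℝ) (hY : ∀ t, Measurable (Y t))
    (hint : ∀ t d : Bool, Integrable (fun ω => Y t (Z d ω)) μ)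
    (hdist : μ.map (Z true) = μ.map (Z false)) :
    (∫ ω, (Y true (Z true ω) - Y true (Z false ω)) ∂μ = 0)
    ∧ ∫ ω, (Y true (Z true ω) - Y false (Z false ω)) ∂μ
        = ∫ ω, (Y true (Z false ω) - Y false (Z false ω)) ∂μ := by
  have key : ∫ ω, Y true (Z true ω) ∂μ = ∫ ω, Y true (Z false ω) ∂μ := by
    rw [← integral_map (hZ true).aemeasurable (hY true).aestronglyMeasurable, hdist,
      integral_map (hZ false).aemeasurable (hY true).aestronglyMeasurable]
  constructor
  · rw [integral_sub (hint true true) (hint true false), key, sub_self]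
  · rw [integral_sub (hint true true) (hint false false),
      integral_sub (hint true false) (hint false false), key]
end

section
/- Unbiasedness of the paired edit estimator (Proposition 1): Suppose there are N original texts indexed i = 1,…,N, each with J_i ≥ 2 versions W_{i1},…,W_{iJ_i}, where version j = 1 is the original and each edited version j > 1 satisfies T(W_{ij}) = 1 − T(W_{i1}) and Z(W_{ij}) = Z(W_{i1}) =: z_i (edits flip the latent treatment and preserve all other latent features). Suppose texts are randomly assigned to evaluators, so that for every version ij the observed outcome Y_{ij} satisfies E[Y_{ij} | T(W_{ij}) = t, Z(W_{ij}) = z_i] = E[Y(t, z_i)] (unconfoundedness by randomization) and Y(t,z) is integrable. Then the estimator τ̂_t := (1/N) Σ_{i=1}^{N} [ (Σ_j Y_{ij} T_{ij}) / (Σ_j T_{ij}) − (Σ_j Y_{ij} (1 − T_{ij})) / (Σ_j (1 − T_{ij})) ], with T_{ij} := T(W_{ij}), satisfies E[τ̂_t] = τ_t, where τ_t := E_Z[Y(1, Z) − Y(0, Z)] and Z is distributed as the empirical distribution of the latent features z_1,…,z_N of the original texts. -/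
open MeasureTheory Finset

/-- Unbiasedness of the paired edit estimator (Proposition 1).
There are `N` original texts, text `i` having `J i ≥ 2` versions; version `0`
is the original and every edit `j ≠ 0` flips the binary latent treatment
(`T i j = 1 - T i 0`) while preserving the latent non-treatment features
`z i`.  `Ypot t z` is the (random, integrable) potential outcome of a reader
exposed to a text with latent treatment `t` and latent features `z`; by the
random assignment of texts to evaluators, the observed outcome `Yobs i j` of
version `j` of text `i` satisfies
`E[Yobs i j] = E[Ypot (T i j) (z i)]` (unconfoundedness).  Then the expectation
of the paired edit estimator `τ̂_t` equals
`τ_t = (1/N) ∑ i, E[Ypot 1 (z i) − Ypot 0 (z i)]`, the average treatment-only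
effect over the empirical distribution of the latent features of the original
texts. -/
theorem paired_edit_estimator_unbiased
    {Ω : Type*} [MeasurableSpace Ω] (μ : Measure Ω) [IsProbabilityMeasure μ]
    {ζ : Type*}
    (N : ℕ) (hN : 0 < N)
    (J : Fin N → ℕ) (hJ : ∀ i, 2 ≤ J i)
    (T : (i : Fin N) → Fin (J i) → ℝ)
    (hT01 : ∀ i j, T i j = 0 ∨ T i j = 1)
    (hflip : ∀ i (j : Fin (J i)), j ≠ ⟨0, by have := hJ i; omega⟩ →
      T i j = 1 - T i ⟨0, by have := hJ i; omega⟩)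
    (z : Fin N → ζ)
    (Ypot : ℝ → ζ → Ω → ℝ)
    (hYpotInt : ∀ t zval, Integrable (Ypot t zval) μ)
    (Yobs : (i : Fin N) → Fin (J i) → Ω → ℝ)
    (hYobsInt : ∀ i j, Integrable (Yobs i j) μ)
    (hunconf : ∀ i j, ∫ ω, Yobs i j ω ∂μ = ∫ ω, Ypot (T i j) (z i) ω ∂μ) :
    ∫ ω, ((N : ℝ)⁻¹ * ∑ i, ((∑ j, Yobs i j ω * T i j) / (∑ j, T i j)
        - (∑ j, Yobs i j ω * (1 - T i j)) / (∑ j, (1 - T i j)))) ∂μ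
      = (N : ℝ)⁻¹ * ∑ i, ∫ ω, (Ypot 1 (z i) ω - Ypot 0 (z i) ω) ∂μ := by

  classical
  -- integrability of the per-text estimator
  have hint1 : ∀ i : Fin N, Integrable (fun ω => ∑ j, Yobs i j ω * T i j) μ := by
    intro i
    exact integrable_finset_sum _ (fun j _ => (hYobsInt i j).mul_const _)
  have hint2 : ∀ i : Fin N, Integrable (fun ω => ∑ j, Yobs i j ω * (1 - T i j)) μ := by
    intro i
    exact integrable_finset_sum _ (fun j _ => (hYobsInt i j).mul_const _)
  have hintI : ∀ i : Fin N, Integrable (fun ω =>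
      (∑ j, Yobs i j ω * T i j) / (∑ j, T i j)
        - (∑ j, Yobs i j ω * (1 - T i j)) / (∑ j, (1 - T i j))) μ := by
    intro i
    exact ((hint1 i).div_const _).sub ((hint2 i).div_const _)
  have key : ∀ i : Fin N,
      ∫ ω, ((∑ j, Yobs i j ω * T i j) / (∑ j, T i j)
        - (∑ j, Yobs i j ω * (1 - T i j)) / (∑ j, (1 - T i j))) ∂μ
      = ∫ ω, (Ypot 1 (z i) ω - Ypot 0 (z i) ω) ∂μ := by
    intro i
    have hJi := hJ i
    set j0 : Fin (J i) := ⟨0, by omega⟩ with hj0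
    -- the sums of treatments are nonzero
    have hTnn : ∀ j : Fin (J i), (0:ℝ) ≤ T i j := by
      intro j; rcases hT01 i j with h | h <;> rw [h] <;> norm_num
    have hT1nn : ∀ j : Fin (J i), (0:ℝ) ≤ 1 - T i j := by
      intro j; rcases hT01 i j with h | h <;> rw [h] <;> norm_num
    have ha0 : (∑ j, T i j) ≠ 0 := by
      rcases hT01 i j0 with h | h
      · have hj1 : (⟨1, by omega⟩ : Fin (J i)) ≠ j0 := by
          simp [hj0, Fin.ext_iff]
        have hT1 : T i ⟨1, by omega⟩ = 1 := by
          rw [hflip i ⟨1, by omega⟩ hj1, h]; ring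
        have : (1:ℝ) ≤ ∑ j, T i j := by
          have := Finset.single_le_sum (f := fun j => T i j)
            (fun j _ => hTnn j) (Finset.mem_univ (⟨1, by omega⟩ : Fin (J i)))
          simpa [hT1] using this
        linarith
      · have : (1:ℝ) ≤ ∑ j, T i j := by
          have := Finset.single_le_sum (f := fun j => T i j)
            (fun j _ => hTnn j) (Finset.mem_univ j0)
          simpa [h] using this
        linarith
    have hb0 : (∑ j, (1 - T i j)) ≠ 0 := by
      rcases hT01 i j0 with h | h
      · have : (1:ℝ) ≤ ∑ j, (1 - T i j) := by
          have := Finset.single_le_sum (f := fun j => 1 - T i j)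
            (fun j _ => hT1nn j) (Finset.mem_univ j0)
          simpa [h] using this
        linarith
      · have hj1 : (⟨1, by omega⟩ : Fin (J i)) ≠ j0 := by
          simp [hj0, Fin.ext_iff]
        have hT1 : T i ⟨1, by omega⟩ = 0 := by
          rw [hflip i ⟨1, by omega⟩ hj1, h]; ring
        have : (1:ℝ) ≤ ∑ j, (1 - T i j) := by
          have := Finset.single_le_sum (f := fun j => 1 - T i j)
            (fun j _ => hT1nn j) (Finset.mem_univ (⟨1, by omega⟩ : Fin (J i)))
          simpa [hT1] using this
        linarith
    rw [integral_sub ((hint1 i).div_const _) ((hint2 i).div_const _),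
        integral_div, integral_div,
        integral_finset_sum _ (fun j _ => (hYobsInt i j).mul_const _),
        integral_finset_sum _ (fun j _ => (hYobsInt i j).mul_const _),
        integral_sub (hYpotInt 1 (z i)) (hYpotInt 0 (z i))]
    have h1 : ∀ j : Fin (J i),
        ∫ ω, Yobs i j ω * T i j ∂μ = (∫ ω, Ypot 1 (z i) ω ∂μ) * T i j := by
      intro j
      rw [integral_mul_const, hunconf i j]
      rcases hT01 i j with h | h <;> rw [h] <;> simp
    have h2 : ∀ j : Fin (J i),
        ∫ ω, Yobs i j ω * (1 - T i j) ∂μ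
          = (∫ ω, Ypot 0 (z i) ω ∂μ) * (1 - T i j) := by
      intro j
      rw [integral_mul_const, hunconf i j]
      rcases hT01 i j with h | h <;> rw [h] <;> simp
    simp_rw [h1, h2, ← Finset.mul_sum]
    rw [mul_div_assoc, mul_div_assoc, div_self ha0, div_self hb0, mul_one, mul_one]
  rw [integral_const_mul, integral_finset_sum _ (fun i _ => hintI i)]
  congr 1
  exact Finset.sum_congr rfl (fun i _ => key i)
end

section
/- Weighted least squares representation of the paired edit estimator: For data {(Y_{ij}, T_{ij}) : i = 1,…,N, j = 1,…,J_i} with T_{ij} ∈ {0,1} and, for each i, at least one version with T_{ij} = 1 and at least one with T_{ij} = 0, consider the weighted least squares regression of Y_{ij} on a treatment indicator T_{ij} and a fixed effect (intercept) for each original text i, with weight w_{ij} = ( Σ_{j'=1}^{J_i} 1{T_{ij'} = T_{ij}} )^{-1} for observation (i,j), i.e. coefficients minimizing Σ_{i,j} w_{ij} ( Y_{ij} − α_i − β T_{ij} )². Then the minimizing treatment coefficient β equals N·τ̂_t / N = τ̂_t, the paired edit estimator τ̂_t := (1/N) Σ_{i=1}^{N} [ (Σ_j Y_{ij} T_{ij})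 / (Σ_j T_{ij}) − (Σ_j Y_{ij} (1 − T_{ij})) / (Σ_j (1 − T_{ij})) ]. -/
open Finset
open scoped Classical

/-- Shifting a weighted quadratic sum around the weighted mean. -/
lemma quad_shift {M : ℕ} (T Y : Fin M → ℝ) (hs : (∑ j, T j) ≠ 0) (u : ℝ) :
    (∑ j, T j)⁻¹ * ∑ j, T j * (Y j - u) ^ 2
      = (u - (∑ j, Y j * T j) / (∑ j, T j)) ^ 2
        + (∑ j, T j)⁻¹ * ∑ j, T j * (Y j - (∑ j, Y j * T j) / (∑ j, T j)) ^ 2 := by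
  have h1 : ∀ v : ℝ, ∑ j, T j * (Y j - v) ^ 2
      = (∑ j, T j * Y j ^ 2) - 2 * v * (∑ j, Y j * T j) + v ^ 2 * (∑ j, T j) := by
    intro v
    rw [Finset.mul_sum, Finset.mul_sum, ← Finset.sum_sub_distrib, ← Finset.sum_add_distrib]
    exact Finset.sum_congr rfl fun j _ => by ring
  rw [h1, h1]
  field_simp
  ring

/-- Weighted least squares representation of the paired edit estimator.
For each original text `i` with versions `j : Fin (J i)`, outcomes `Y i j`,
binary treatment indicators `T i j ∈ {0,1}` with both groups nonempty, and
weights `w i j = (∑ j', 1{T i j' = T i j})⁻¹`, any minimizer `(α, β)` of the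
weighted least squares objective
`∑ i ∑ j, w i j * (Y i j − α i − β * T i j)²`
(over the per-text fixed effects `α` and the common treatment coefficient `β`)
has treatment coefficient `β` equal to the paired edit estimator `τ̂_t`. -/
theorem wls_representation_of_paired_edit_estimator
    (N : ℕ) (hN : 0 < N)
    (J : Fin N → ℕ)
    (Y : (i : Fin N) → Fin (J i) → ℝ)
    (T : (i : Fin N) → Fin (J i) → ℝ)
    (hT01 : ∀ i j, T i j = 0 ∨ T i j = 1)
    (hboth : ∀ i, (∃ j, T i j = 1) ∧ (∃ j, T i j = 0))
    (w : (i : Fin N) → Fin (J i) → ℝ)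
    (hw : ∀ i j, w i j = (∑ j', if T i j' = T i j then (1 : ℝ) else 0)⁻¹)
    (α : Fin N → ℝ) (β : ℝ)
    (hmin : ∀ (α' : Fin N → ℝ) (β' : ℝ),
      ∑ i, ∑ j, w i j * (Y i j - α i - β * T i j) ^ 2
        ≤ ∑ i, ∑ j, w i j * (Y i j - α' i - β' * T i j) ^ 2) :
    β = (N : ℝ)⁻¹ * ∑ i, ((∑ j, Y i j * T i j) / (∑ j, T i j)
        - (∑ j, Y i j * (1 - T i j)) / (∑ j, (1 - T i j))) := by
  -- notation
  set a : Fin N → ℝ := fun i => (∑ j, Y i j * T i j) / (∑ j, T i j) with ha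
  set b : Fin N → ℝ := fun i => (∑ j, Y i j * (1 - T i j)) / (∑ j, (1 - T i j)) with hb
  set τ : ℝ := (N : ℝ)⁻¹ * ∑ i, (a i - b i) with hτ
  -- positivity of group sizes
  have hn1 : ∀ i, (∑ j, T i j) ≠ 0 := by
    intro i
    obtain ⟨j1, hj1⟩ := (hboth i).1
    have h := Finset.single_le_sum (f := fun j => T i j)
      (fun j _ => by rcases hT01 i j with h | h <;> simp [h]) (Finset.mem_univ j1)
    simp only [hj1] at h
    linarith
  have hn0 : ∀ i, (∑ j, (1 - T i j)) ≠ 0 := by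
    intro i
    obtain ⟨j0, hj0⟩ := (hboth i).2
    have h := Finset.single_le_sum (f := fun j => 1 - T i j)
      (fun j _ => by rcases hT01 i j with h | h <;> simp [h]) (Finset.mem_univ j0)
    simp only [hj0] at h
    linarith
  -- the per-text objective decomposition
  have hS : ∀ i (c γ : ℝ),
      ∑ j, w i j * (Y i j - c - γ * T i j) ^ 2
        = (c + γ - a i) ^ 2 + (c - b i) ^ 2
          + ((∑ j, T i j)⁻¹ * ∑ j, T i j * (Y i j - a i) ^ 2
            + (∑ j, (1 - T i j))⁻¹ * ∑ j, (1 - T i j) * (Y i j - b i) ^ 2) := by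
    intro i c γ
    have hptw : ∀ j, w i j * (Y i j - c - γ * T i j) ^ 2
        = (∑ j', T i j')⁻¹ * (T i j * (Y i j - (c + γ)) ^ 2)
          + (∑ j', (1 - T i j'))⁻¹ * ((1 - T i j) * (Y i j - c) ^ 2) := by
      intro j
      rcases hT01 i j with h | h
      · have : (∑ j', if T i j' = T i j then (1 : ℝ) else 0) = ∑ j', (1 - T i j') := by
          apply Finset.sum_congr rfl
          intro j' _
          rcases hT01 i j' with h' | h' <;> simp [h, h']
        rw [hw, this, h]
        ring
      · have : (∑ j', if T i j' = T i j then (1 : ℝ) else 0) = ∑ j', T i j' := by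
          apply Finset.sum_congr rfl
          intro j' _
          rcases hT01 i j' with h' | h' <;> simp [h, h']
        rw [hw, this, h]
        ring
    calc ∑ j, w i j * (Y i j - c - γ * T i j) ^ 2
        = (∑ j, T i j)⁻¹ * (∑ j, T i j * (Y i j - (c + γ)) ^ 2)
          + (∑ j, (1 - T i j))⁻¹ * (∑ j, (1 - T i j) * (Y i j - c) ^ 2) := by
          rw [Finset.sum_congr rfl fun j _ => hptw j, Finset.sum_add_distrib,
            ← Finset.mul_sum, ← Finset.mul_sum]
      _ = _ := by
          rw [quad_shift (T i) (Y i) (hn1 i) (c + γ),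
            quad_shift (fun j => 1 - T i j) (Y i) (hn0 i) c]
          ring
  -- use the minimizer property with the competitor (α', τ)
  have hkey := hmin (fun i => (a i + b i - τ) / 2) τ
  have hL : ∀ i, ∑ j, w i j * (Y i j - α i - β * T i j) ^ 2
      = (α i + β - a i) ^ 2 + (α i - b i) ^ 2
        + ((∑ j, T i j)⁻¹ * ∑ j, T i j * (Y i j - a i) ^ 2
          + (∑ j, (1 - T i j))⁻¹ * ∑ j, (1 - T i j) * (Y i j - b i) ^ 2) :=
    fun i => hS i (α i) β
  have hR : ∀ i, ∑ j, w i j * (Y i j - (a i + b i - τ) / 2 - τ * T i j) ^ 2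
      = (a i - b i - τ) ^ 2 / 2
        + ((∑ j, T i j)⁻¹ * ∑ j, T i j * (Y i j - a i) ^ 2
          + (∑ j, (1 - T i j))⁻¹ * ∑ j, (1 - T i j) * (Y i j - b i) ^ 2) := by
    intro i
    rw [hS i ((a i + b i - τ) / 2) τ]
    ring
  rw [Finset.sum_congr rfl fun i _ => hL i, Finset.sum_congr rfl fun i _ => hR i,
    Finset.sum_add_distrib, Finset.sum_add_distrib, Finset.sum_add_distrib,
    Finset.sum_add_distrib, Finset.sum_add_distrib] at hkey
  have hkey2 : ∑ i, (α i + β - a i) ^ 2 + ∑ i, (α i - b i) ^ 2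
      ≤ ∑ i, (a i - b i - τ) ^ 2 / 2 := by
    linarith
  -- lower bound the left side
  have hlb : ∑ i, (a i - b i - β) ^ 2 / 2
      ≤ ∑ i, (α i + β - a i) ^ 2 + ∑ i, (α i - b i) ^ 2 := by
    rw [← Finset.sum_add_distrib]
    apply Finset.sum_le_sum
    intro i _
    nlinarith [sq_nonneg (α i + β - a i + (α i - b i))]
  -- expand around τ
  have hsum : ∑ i, (a i - b i) = (N : ℝ) * τ := by
    rw [hτ]
    field_simp
  have hexp : ∑ i, (a i - b i - β) ^ 2 - ∑ i, (a i - b i - τ) ^ 2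
      = (N : ℝ) * (β - τ) ^ 2 := by
    rw [← Finset.sum_sub_distrib]
    have h1 : ∑ i : Fin N, ((a i - b i - β) ^ 2 - (a i - b i - τ) ^ 2)
        = ∑ i : Fin N, (2 * (τ - β) * (a i - b i) + (β ^ 2 - τ ^ 2)) :=
      Finset.sum_congr rfl fun i _ => by ring
    rw [h1, Finset.sum_add_distrib, ← Finset.mul_sum, hsum, Finset.sum_const,
      Finset.card_univ, Fintype.card_fin, nsmul_eq_mul]
    ring
  have hNpos : (0 : ℝ) < (N : ℝ) := by exact_mod_cast hN
  have h3 : ∑ i, (a i - b i - β) ^ 2 / 2 ≤ ∑ i, (a i - b i - τ) ^ 2 / 2 :=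
    le_trans hlb hkey2
  rw [← Finset.sum_div, ← Finset.sum_div] at h3
  have hle : (N : ℝ) * (β - τ) ^ 2 ≤ 0 := by linarith
  have hβτ : (β - τ) ^ 2 = 0 := by
    nlinarith [sq_nonneg (β - τ)]
  have : β - τ = 0 := pow_eq_zero_iff (n := 2) (by norm_num) |>.mp hβτ
  linarith [this]
end
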